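/- If two multivariate normal clusters satisfy Σ₁ = λΣ₂ for some λ > 0, then the LDA axis a_LDA = ((Σ₁+Σ₂)/2)⁻¹(μ₂−μ₁) minimizes, over all nonzero axes a ∈ ℝ^p, the equalized misclassification error 1 − Φ(aᵀ(μ₂−μ₁)/(√(aᵀΣ₁a) + √(aᵀΣ₂a))); equivalently, a_LDA maximizes the separation quantile q(a) = aᵀ(μ₂−μ₁)/(√(aᵀΣ₁a)+√(aᵀΣ₂a)). -/

import Mathlib

open Matrix

/-- The separation quantile `q(a) = aᵀ(μ₂−μ₁)/(√(aᵀΣ₁a)+√(aᵀΣ₂a))`. -/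
noncomputable def separationQuantile {p : ℕ} (μ₁ μ₂ : Fin p → ℝ)
    (S₁ S₂ : Matrix (Fin p) (Fin p) ℝ) (a : Fin p → ℝ) : ℝ :=
  a ⬝ᵥ (μ₂ - μ₁) / (Real.sqrt (a ⬝ᵥ S₁.mulVec a) + Real.sqrt (a ⬝ᵥ S₂.mulVec a))

/-- Cauchy–Schwarz for the bilinear form of a positive semidefinite real matrix. -/
lemma posSemidef_cauchy_schwarz {p : ℕ} {S : Matrix (Fin p) (Fin p) ℝ}
    (hS : S.PosSemidef) (a b : Fin p → ℝ) :
    (a ⬝ᵥ S.mulVec b) ^ 2 ≤ (a ⬝ᵥ S.mulVec a) * (b ⬝ᵥ S.mulVec b) := by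
  have hsymm : ∀ u v : Fin p → ℝ, u ⬝ᵥ S.mulVec v = v ⬝ᵥ S.mulVec u := by
    intro u v
    have hST : Sᵀ = S := hS.1
    rw [Matrix.dotProduct_mulVec, ← Matrix.mulVec_transpose, hST, dotProduct_comm]
  have key : ∀ t : ℝ,
      0 ≤ (b ⬝ᵥ S.mulVec b) * (t * t) + (2 * (a ⬝ᵥ S.mulVec b)) * t + (a ⬝ᵥ S.mulVec a) := by
    intro t
    have h0 := hS.dotProduct_mulVec_nonneg (a + t • b)
    simp only [star_trivial, Matrix.mulVec_add, Matrix.mulVec_smul, dotProduct_add,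
      add_dotProduct, dotProduct_smul, smul_dotProduct, smul_eq_mul] at h0
    rw [hsymm b a] at h0
    nlinarith [h0]
  have hd := discrim_le_zero key
  rw [discrim] at hd
  nlinarith [hd]

/-- If `Σ₁ = λΣ₂` with `λ > 0`, then the LDA axis `a_LDA = ((Σ₁+Σ₂)/2)⁻¹(μ₂−μ₁)`
maximizes the separation quantile `q(a)` over all nonzero axes `a`; equivalently
(since `Φ` is strictly increasing), it minimizes the equalized misclassification
error `1 − Φ(q(a))`. -/
theorem lda_axis_maximizes_separation {p : ℕ}
    (μ₁ μ₂ : Fin p → ℝ) (hμ : μ₁ ≠ μ₂)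
    (S₁ S₂ : Matrix (Fin p) (Fin p) ℝ) (h₂ : S₂.PosDef)
    (l : ℝ) (hl : 0 < l) (hS : S₁ = l • S₂) :
    ∀ a : Fin p → ℝ, a ≠ 0 →
      separationQuantile μ₁ μ₂ S₁ S₂ a
        ≤ separationQuantile μ₁ μ₂ S₁ S₂ (((S₁ + S₂) / 2)⁻¹.mulVec (μ₂ - μ₁)) := by
  intro a ha
  set d : Fin p → ℝ := μ₂ - μ₁ with hdd
  have hd : d ≠ 0 := sub_ne_zero_of_ne (Ne.symm hμ)
  have hdet : IsUnit S₂.det := (h₂.det_pos.ne').isUnit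
  have hc0 : (0:ℝ) < (l + 1) / 2 := by linarith
  -- identify the matrix (S₁ + S₂)/2
  have h2inv : (2 : Matrix (Fin p) (Fin p) ℝ)⁻¹ = (2⁻¹:ℝ) • 1 := by
    refine Matrix.inv_eq_left_inv ?_
    rw [smul_mul_assoc, one_mul]
    ext i j
    simp only [Matrix.smul_apply, ← Matrix.diagonal_ofNat, Matrix.diagonal_apply,
      Matrix.one_apply, smul_eq_mul]
    split <;> norm_num
  have h2m : ((S₁ + S₂) / 2) = (((l + 1) / 2 : ℝ)) • S₂ := by
    rw [div_eq_mul_inv, h2inv, hS, mul_smul_comm, mul_one]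
    module
  have hinv : ((S₁ + S₂) / 2)⁻¹ = ((2 / (l + 1) : ℝ)) • S₂⁻¹ := by
    haveI : Invertible ((l + 1) / 2 : ℝ) := invertibleOfNonzero hc0.ne'
    rw [h2m, Matrix.inv_smul S₂ _ hdet, invOf_eq_inv]
    congr 1
    rw [inv_div]
  set c : ℝ := 2 / (l + 1) with hcdef
  have hc : 0 < c := by positivity
  set b : Fin p → ℝ := S₂⁻¹.mulVec d with hbdef
  have haL : ((S₁ + S₂) / 2)⁻¹.mulVec d = c • b := by
    rw [hinv, Matrix.smul_mulVec]
  have hS2b : S₂.mulVec b = d := by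
    rw [hbdef, Matrix.mulVec_mulVec, Matrix.mul_nonsing_inv _ hdet, Matrix.one_mulVec]
  set K : ℝ := d ⬝ᵥ b with hKdef
  have hK : 0 < K := by
    have := (h₂.inv).dotProduct_mulVec_pos hd
    simpa [hbdef, hKdef] using this
  have hbSb : b ⬝ᵥ S₂.mulVec b = K := by
    rw [hS2b, hKdef, dotProduct_comm]
  set t : ℝ := a ⬝ᵥ S₂.mulVec a with htdef
  have ht : 0 < t := by
    have := h₂.dotProduct_mulVec_pos ha
    simpa [htdef] using this
  -- Cauchy–Schwarz gives (a ⬝ᵥ d)² ≤ t * K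
  have hcs : (a ⬝ᵥ d) ^ 2 ≤ t * K := by
    have h := posSemidef_cauchy_schwarz h₂.posSemidef a b
    rwa [hbSb, hS2b, ← htdef] at h
  have hsl : (0:ℝ) < Real.sqrt l + 1 := by positivity
  have hst : 0 < Real.sqrt t := Real.sqrt_pos.mpr ht
  -- numerator bound
  have hnum : a ⬝ᵥ d ≤ Real.sqrt t * Real.sqrt K := by
    rcases le_or_gt (a ⬝ᵥ d) 0 with h | h
    · exact h.trans (by positivity)
    · rw [← Real.sqrt_mul ht.le]
      rw [← Real.sqrt_sq h.le]
      exact Real.sqrt_le_sqrt hcs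
  -- value at a general axis
  have hq1 : separationQuantile μ₁ μ₂ S₁ S₂ a
      = a ⬝ᵥ d / ((Real.sqrt l + 1) * Real.sqrt t) := by
    rw [separationQuantile, hS]
    rw [Matrix.smul_mulVec, dotProduct_smul, smul_eq_mul,
      Real.sqrt_mul hl.le, ← htdef, ← hdd]
    ring_nf
  -- value at the LDA axis
  have e1 : (c • b) ⬝ᵥ d = c * K := by
    rw [smul_dotProduct, smul_eq_mul, dotProduct_comm, ← hKdef]
  have e3 : (c • b) ⬝ᵥ S₂.mulVec (c • b) = c * (c * K) := by
    rw [Matrix.mulVec_smul, hS2b, dotProduct_smul, smul_dotProduct]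
    simp only [smul_eq_mul, dotProduct_comm b d, ← hKdef]
  have e2 : (c • b) ⬝ᵥ S₁.mulVec (c • b) = l * (c * (c * K)) := by
    rw [hS, Matrix.smul_mulVec, dotProduct_smul, smul_eq_mul, e3]
  have s2 : Real.sqrt (c * (c * K)) = c * Real.sqrt K := by
    rw [show c * (c * K) = (c * Real.sqrt K) ^ 2 by
        rw [mul_pow, Real.sq_sqrt hK.le]; ring,
      Real.sqrt_sq (by positivity)]
  have s1 : Real.sqrt (l * (c * (c * K))) = Real.sqrt l * (c * Real.sqrt K) := by
    rw [show l * (c * (c * K)) = (Real.sqrt l * (c * Real.sqrt K)) ^ 2 by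
        rw [mul_pow, mul_pow, Real.sq_sqrt hl.le, Real.sq_sqrt hK.le]; ring,
      Real.sqrt_sq (by positivity)]
  have hq2 : separationQuantile μ₁ μ₂ S₁ S₂ (((S₁ + S₂) / 2)⁻¹.mulVec (μ₂ - μ₁))
      = Real.sqrt K / (Real.sqrt l + 1) := by
    rw [separationQuantile, ← hdd, haL, e1, e2, e3, s1, s2,
      show Real.sqrt l * (c * Real.sqrt K) + c * Real.sqrt K
        = (c * Real.sqrt K) * (Real.sqrt l + 1) by ring,
      show c * K = (c * Real.sqrt K) * Real.sqrt K by
        rw [mul_assoc, Real.mul_self_sqrt hK.le],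
      mul_div_mul_left _ _ (by positivity : c * Real.sqrt K ≠ 0)]
  rw [hq1, hq2]
  rw [div_le_div_iff₀ (by positivity) hsl]
  calc a ⬝ᵥ d * (Real.sqrt l + 1) ≤ Real.sqrt t * Real.sqrt K * (Real.sqrt l + 1) := by
        exact mul_le_mul_of_nonneg_right hnum hsl.le
    _ = Real.sqrt K * ((Real.sqrt l + 1) * Real.sqrt t) := by ring
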